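/- Let B be an oriented incidence matrix of a connected graph with diagonal weight matrix W having strictly positive entries, set L = B·W·Bᵀ with Moore–Penrose pseudoinverse L†, and let B_Δ be the submatrix of B consisting of the columns indexed by a nonempty subset E_Δ of the edges. Define M = B_Δᵀ·L†·B_Δ. Then M is positive semidefinite; for each edge k ∈ E_Δ with endpoints u_k and v_k, the diagonal entry M_kk equals the effective resistance R_{u_k v_k} = (e_{u_k} − e_{v_k})ᵀ·L†·(e_{u_k} − e_{v_k}); and consequently max_{k ∈ E_Δ} R_{u_k v_k} ≤ σ̄(M) ≤ trace(M) = Σ_{k ∈ E_Δ} R_{u_k v_k}, where σ̄(M) is the largest singular value (ℓ²→ℓ² operator norm) of M. -/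

import Mathlib

open Matrix
open scoped Matrix.Norms.L2Operator MatrixOrder

/-- `B` is an oriented incidence matrix: every column has exactly one `1`,
exactly one `-1`, and zeros elsewhere. -/
def IsIncidenceMatrix {V E : Type*} (B : Matrix V E ℝ) : Prop :=
  ∀ e : E, ∃ i j : V, i ≠ j ∧ B i e = 1 ∧ B j e = -1 ∧
    ∀ k : V, k ≠ i → k ≠ j → B k e = 0


lemma aux_opnorm_le_frob {n : Type*} [Fintype n] [DecidableEq n] (A : Matrix n n ℝ) :
    ‖toEuclideanCLM (𝕜 := ℝ) A‖ ≤ Real.sqrt (∑ i, ∑ j, (A i j)^2) := by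
  apply ContinuousLinearMap.opNorm_le_bound _ (Real.sqrt_nonneg _)
  intro x
  have hx : ‖x‖ = Real.sqrt (∑ i, (x i)^2) := by
    rw [EuclideanSpace.norm_eq]
    congr 1
    exact Finset.sum_congr rfl fun i _ => by rw [Real.norm_eq_abs, sq_abs]
  have happ : ∀ i, (toEuclideanCLM (𝕜 := ℝ) A x) i = ∑ j, A i j * x j := by
    intro i
    have := congrFun (ofLp_toEuclideanCLM (𝕜 := ℝ) A x) i
    simpa [Matrix.mulVec, dotProduct] using this
  have hnx : ‖toEuclideanCLM (𝕜 := ℝ) A x‖ = Real.sqrt (∑ i, (∑ j, A i j * x j)^2) := by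
    rw [EuclideanSpace.norm_eq]
    congr 1
    exact Finset.sum_congr rfl fun i _ => by rw [Real.norm_eq_abs, sq_abs, happ]
  rw [hnx, hx, ← Real.sqrt_mul (by positivity)]
  apply Real.sqrt_le_sqrt
  rw [Finset.sum_mul]
  apply Finset.sum_le_sum
  intro i _
  exact Finset.sum_mul_sq_le_sq_mul_sq _ _ _

lemma aux_norm_le_trace {n : Type*} [Fintype n] [DecidableEq n] (M : Matrix n n ℝ)
    (hM : M.PosSemidef) : ‖toEuclideanCLM (𝕜 := ℝ) M‖ ≤ M.trace := by
  set S := CFC.sqrt M with hSdef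
  have hSS : S * S = M := CFC.sqrt_mul_sqrt_self M hM.nonneg
  have hSh : Sᴴ = S := (CFC.sqrt_nonneg M).posSemidef.1.eq
  have hSt : Sᵀ = S := by rw [← conjTranspose_eq_transpose_of_trivial]; exact hSh
  have hnorm : ‖toEuclideanCLM (𝕜 := ℝ) M‖ = ‖toEuclideanCLM (𝕜 := ℝ) S‖ ^ 2 := by
    rw [← cstar_norm_def, ← cstar_norm_def, ← hSS]
    calc ‖S * S‖ = ‖Sᴴ * S‖ := by rw [hSh]
      _ = ‖S‖ * ‖S‖ := l2_opNorm_conjTranspose_mul_self S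
      _ = ‖S‖ ^ 2 := (pow_two _).symm
  have htr : M.trace = ∑ i, ∑ j, (S i j)^2 := by
    rw [← hSS, Matrix.trace]
    simp only [Matrix.diag_apply, Matrix.mul_apply, pow_two]
    refine Finset.sum_congr rfl fun i _ => Finset.sum_congr rfl fun j _ => ?_
    rw [show S j i = Sᵀ i j from rfl, hSt]
  rw [hnorm, htr]
  calc ‖toEuclideanCLM (𝕜 := ℝ) S‖ ^ 2 ≤ Real.sqrt (∑ i, ∑ j, (S i j)^2) ^ 2 :=
        pow_le_pow_left₀ (norm_nonneg _) (aux_opnorm_le_frob S) 2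
    _ = ∑ i, ∑ j, (S i j)^2 := Real.sq_sqrt (by positivity)

lemma aux_pinv_symm {n : Type*} [Fintype n] [DecidableEq n] (L X : Matrix n n ℝ)
    (hL : Lᵀ = L) (h1 : L * X * L = L) (h2 : X * L * X = X)
    (h3 : (L * X)ᵀ = L * X) (h4 : (X * L)ᵀ = X * L) : Xᵀ = X := by
  set Y := Xᵀ with hY
  have hYX : Yᵀ = X := by rw [hY, transpose_transpose]
  have r1 : L * Y = X * L := by
    conv_rhs => rw [← h4]
    rw [transpose_mul, hL]
  have r2 : Y * L = L * X := by
    conv_rhs => rw [← h3]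
    rw [transpose_mul, hL]
  have q1 : L * Y * L = L := by
    have t := congrArg Matrix.transpose h1
    rw [transpose_mul, transpose_mul, hL] at t
    rw [← Matrix.mul_assoc] at t
    exact t
  have q2 : Y * L * Y = Y := by
    have t := congrArg Matrix.transpose h2
    rw [transpose_mul, transpose_mul, hL] at t
    rw [← Matrix.mul_assoc] at t
    exact t
  have s2 : (L * Y)ᵀ = L * Y := by
    rw [transpose_mul, hYX, hL, r1]
  have s4 : (Y * L)ᵀ = Y * L := by
    rw [transpose_mul, hYX, hL, r2]
  have e1 : L * X = L * Y := by
    have s1 : L * X = (L * Y) * (L * X) := by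
      calc L * X = (L * Y * L) * X := by rw [q1]
        _ = (L * Y) * (L * X) := by rw [Matrix.mul_assoc]
    have t := congrArg Matrix.transpose s1
    rw [transpose_mul (L * Y) (L * X), h3, s2] at t
    calc L * X = (L * X) * (L * Y) := t
      _ = (L * X * L) * Y := by rw [Matrix.mul_assoc (L * X) L Y]
      _ = L * Y := by rw [h1]
  have e2 : X * L = Y * L := by
    have s3 : X * L = (X * L) * (Y * L) := by
      calc X * L = X * (L * Y * L) := by rw [q1]
        _ = (X * L) * (Y * L) := by
            rw [← Matrix.mul_assoc, ← Matrix.mul_assoc, Matrix.mul_assoc (X * L) Y L]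
    have t := congrArg Matrix.transpose s3
    rw [transpose_mul (X * L) (Y * L), h4, s4] at t
    calc X * L = (Y * L) * (X * L) := t
      _ = Y * (L * X * L) := by rw [Matrix.mul_assoc Y L (X * L), Matrix.mul_assoc L X L]
      _ = Y * L := by rw [h1]
  have final : X = Y := by
    calc X = X * L * X := h2.symm
      _ = (Y * L) * X := by rw [e2]
      _ = Y * (L * X) := by rw [Matrix.mul_assoc]
      _ = Y * (L * Y) := by rw [e1]
      _ = Y * L * Y := by rw [Matrix.mul_assoc]
      _ = Y := q2
  exact final.symm

lemma aux_diag_le_norm {n : Type*} [Fintype n] [DecidableEq n] (A : Matrix n n ℝ) (k : n) :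
    A k k ≤ ‖toEuclideanCLM (𝕜 := ℝ) A‖ := by
  set T := toEuclideanCLM (𝕜 := ℝ) A with hT
  set x : EuclideanSpace ℝ n := EuclideanSpace.single k 1 with hxdef
  have hx : ‖x‖ = 1 := by simp [hxdef, EuclideanSpace.norm_single]
  have happ : ∀ i, (T x) i = A i k := by
    intro i
    have := congrFun (ofLp_toEuclideanCLM (𝕜 := ℝ) A x) i
    rw [this]
    simp [Matrix.mulVec, dotProduct, hxdef, EuclideanSpace.single_apply,
      Pi.single_apply, mul_ite, mul_one, mul_zero, Finset.sum_ite_eq']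
  have hinner : A k k = inner ℝ x (T x) := by
    rw [PiLp.inner_apply]
    simp only [RCLike.inner_apply, starRingEnd_apply, star_trivial, happ]
    simp [hxdef, EuclideanSpace.single_apply, ite_mul, Finset.sum_ite_eq']
  calc A k k = inner ℝ x (T x) := hinner
    _ ≤ ‖x‖ * ‖T x‖ := real_inner_le_norm _ _
    _ = ‖T x‖ := by rw [hx, one_mul]
    _ ≤ ‖T‖ * ‖x‖ := T.le_opNorm x
    _ = ‖T‖ := by rw [hx, mul_one]

/-- for `M = B_Δᵀ·L†·B_Δ` (columns of `B` selected by an injective map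
`ι : Δ → E`, `Δ` nonempty), `M` is positive semidefinite, its diagonal entries are the
effective resistances between the endpoints of the selected edges, and
`max_k R_k ≤ σ̄(M) ≤ trace M = Σ_k R_k`. -/
theorem resistance_bounds_on_M
    {V E Δ : Type*} [Fintype V] [Fintype E] [Fintype Δ]
    [DecidableEq V] [DecidableEq E] [DecidableEq Δ] [Nonempty V] [Nonempty Δ]
    (B : Matrix V E ℝ) (hB : IsIncidenceMatrix B)
    (w : E → ℝ) (hw : ∀ e, 0 < w e)
    -- the graph is connected
    (hConn : LinearMap.ker Bᵀ.mulVecLin = Submodule.span ℝ {(fun _ : V => (1 : ℝ))})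
    -- `Ld` is the Moore–Penrose pseudoinverse of `L = B·W·Bᵀ`
    (Ld : Matrix V V ℝ)
    (hp1 : (B * Matrix.diagonal w * Bᵀ) * Ld * (B * Matrix.diagonal w * Bᵀ) =
      B * Matrix.diagonal w * Bᵀ)
    (hp2 : Ld * (B * Matrix.diagonal w * Bᵀ) * Ld = Ld)
    (hp3 : ((B * Matrix.diagonal w * Bᵀ) * Ld)ᵀ = (B * Matrix.diagonal w * Bᵀ) * Ld)
    (hp4 : (Ld * (B * Matrix.diagonal w * Bᵀ))ᵀ = Ld * (B * Matrix.diagonal w * Bᵀ))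
    -- the subset of edges, selected by an injective index map
    (ι : Δ → E) (hι : Function.Injective ι) :
    let BΔ : Matrix V Δ ℝ := Matrix.of fun v k => B v (ι k)
    let M : Matrix Δ Δ ℝ := BΔᵀ * Ld * BΔ
    M.PosSemidef ∧
    (∀ k : Δ, ∀ u v : V, B u (ι k) = 1 → B v (ι k) = -1 →
      M k k = (Pi.single u 1 - Pi.single v 1) ⬝ᵥ Ld.mulVec (Pi.single u 1 - Pi.single v 1)) ∧
    (∀ k : Δ, M k k ≤ ‖Matrix.toEuclideanCLM (𝕜 := ℝ) M‖) ∧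
    ‖Matrix.toEuclideanCLM (𝕜 := ℝ) M‖ ≤ M.trace := by
  intro BΔ M
  set L : Matrix V V ℝ := B * Matrix.diagonal w * Bᵀ with hLdef
  have hLsym : Lᵀ = L := by
    rw [hLdef, transpose_mul, transpose_mul, transpose_transpose, diagonal_transpose,
      Matrix.mul_assoc]
  have hLdsym : Ldᵀ = Ld := aux_pinv_symm L Ld hLsym hp1 hp2 hp3 hp4
  have hL_psd : L.PosSemidef := by
    have := (Matrix.posSemidef_diagonal_iff.mpr fun e => (hw e).le).mul_mul_conjTranspose_same B
    rwa [conjTranspose_eq_transpose_of_trivial] at this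
  have hLd_psd : Ld.PosSemidef := by
    have := hL_psd.conjTranspose_mul_mul_same Ld
    rw [conjTranspose_eq_transpose_of_trivial, hLdsym] at this
    rwa [hp2] at this
  have hM_psd : M.PosSemidef := by
    have := hLd_psd.conjTranspose_mul_mul_same BΔ
    rwa [conjTranspose_eq_transpose_of_trivial] at this
  refine ⟨hM_psd, ?_, fun k => aux_diag_le_norm M k, aux_norm_le_trace M hM_psd⟩
  intro k u v hu hv
  obtain ⟨i, j, hij, hBi, hBj, hother⟩ := hB (ι k)
  have hui : u = i := by
    by_contra h
    rcases eq_or_ne u j with rfl | h2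
    · rw [hBj] at hu; norm_num at hu
    · rw [hother u h h2] at hu; norm_num at hu
  have hvj : v = j := by
    by_contra h
    rcases eq_or_ne v i with rfl | h2
    · rw [hBi] at hv; norm_num at hv
    · rw [hother v h2 h] at hv; norm_num at hv
  subst hui hvj
  have hc : ∀ a, B a (ι k) = (Pi.single u 1 - Pi.single v 1 : V → ℝ) a := by
    intro a
    have hne : u ≠ v := hij
    rcases eq_or_ne a u with rfl | hau
    · simp [hBi, Pi.single_apply, hne.symm]
    · rcases eq_or_ne a v with rfl | hav
      · simp [hBj, Pi.single_apply, hau]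
      · simp [hother a hau hav, Pi.single_apply, hau, hav]
  have hM : M k k = ∑ b, (∑ a, B a (ι k) * Ld a b) * B b (ι k) := by
    simp [M, BΔ, Matrix.mul_apply, Matrix.transpose_apply]
  rw [hM]
  simp only [hc]
  simp only [dotProduct, Matrix.mulVec, Finset.mul_sum, Finset.sum_mul]
  rw [Finset.sum_comm]
  refine Finset.sum_congr rfl fun a _ => Finset.sum_congr rfl fun b _ => ?_
  ring
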